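/- Let A be a nonsingular M-tensor with diagonal part D and B = D − A ≥ 0, and let b ∈ R^n. Suppose x_0 ≥ 0 satisfies A x_0^{m-1} ≥ b, and let x ≥ 0 satisfy A x^{m-1} ≤ b with x ≤ x_0. Then the Jacobi sequence defined by D x_{k+1}^{m-1} = B x_k^{m-1} + b satisfies x ≤ x_{k+1} ≤ x_k for all k ≥ 0, hence converges to a limit x* with A (x*)^{m-1} = b and x* ≥ x. -/

import Mathlib

open Finset Filter

noncomputable section

/-- Action of an order-(p+1) tensor (p trailing indices):
`(A x^{p})_i = ∑ a_{i i₂ … i_{p+1}} x_{i₂} ⋯ x_{i_{p+1}}`. -/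
def tapp (p n : ℕ) (A : Fin n → (Fin p → Fin n) → ℝ) (x : Fin n → ℝ) : Fin n → ℝ :=
  fun i => ∑ js : Fin p → Fin n, A i js * ∏ j, x (js j)

/-- A `Z`-tensor: all off-diagonal entries are nonpositive. -/
def IsZTensor (p n : ℕ) (A : Fin n → (Fin p → Fin n) → ℝ) : Prop :=
  ∀ i js, (∃ j, js j ≠ i) → A i js ≤ 0

/-- The identity tensor. -/
def identT (p n : ℕ) : Fin n → (Fin p → Fin n) → ℝ :=
  fun i js => if ∀ j, js j = i then 1 else 0

/-- Spectral radius of a tensor: sup of moduli of (real) eigenvalues. -/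
def tensorSpecRad (p n : ℕ) (B : Fin n → (Fin p → Fin n) → ℝ) : ℝ :=
  sSup {r : ℝ | ∃ lam : ℝ, ∃ x : Fin n → ℝ, x ≠ 0 ∧
    (∀ i, tapp p n B x i = lam * x i ^ p) ∧ r = |lam|}

/-- A nonsingular M-tensor: `A = s I − B` with `B ≥ 0` and `s > ρ(B)`. -/
def IsMTensor (p n : ℕ) (A : Fin n → (Fin p → Fin n) → ℝ) : Prop :=
  ∃ s : ℝ, ∃ B : Fin n → (Fin p → Fin n) → ℝ,
    (∀ i js, 0 ≤ B i js) ∧ tensorSpecRad p n B < s ∧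
    ∀ i js, A i js = s * identT p n i js - B i js

/-- The diagonal-part tensor of `A`. -/
def diagT (p n : ℕ) (A : Fin n → (Fin p → Fin n) → ℝ) : Fin n → (Fin p → Fin n) → ℝ :=
  fun i js => if ∀ j, js j = i then A i (fun _ => i) else 0

/-- The majorization matrix of `A`: `M_{ij} = a_{i j … j}`. -/
def majMatrix (p n : ℕ) (A : Fin n → (Fin p → Fin n) → ℝ) : Matrix (Fin n) (Fin n) ℝ :=
  fun i j => A i (fun _ => j)

/-- The "mixed index" part `N = M_tensor − A`: zero on constant trailing tuples,
`−A` elsewhere. -/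
def NPart (p n : ℕ) (A : Fin n → (Fin p → Fin n) → ℝ) : Fin n → (Fin p → Fin n) → ℝ :=
  fun i js => if ∀ j' j'', js j' = js j'' then 0 else -A i js

/-- A nonsingular M-matrix: a Z-matrix with `M y > 0` for some `y > 0`. -/
def IsMMatrix (n : ℕ) (P : Matrix (Fin n) (Fin n) ℝ) : Prop :=
  (∀ i j, i ≠ j → P i j ≤ 0) ∧ ∃ y : Fin n → ℝ, (∀ i, 0 < y i) ∧ ∀ i, 0 < P.mulVec y i

/-- Spectral radius of a real matrix (via its complex spectrum). -/
def matSpecRad (n : ℕ) (J : Matrix (Fin n) (Fin n) ℝ) : ℝ :=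
  sSup {r : ℝ | ∃ μ ∈ spectrum ℂ (J.map (Complex.ofReal ·)), r = ‖μ‖}

/-- Irreducibility of a matrix. -/
def MatIrreducible (n : ℕ) (J : Matrix (Fin n) (Fin n) ℝ) : Prop :=
  ∀ S : Finset (Fin n), S.Nonempty → S ≠ Finset.univ → ∃ i ∈ S, ∃ j, j ∉ S ∧ J i j ≠ 0


section AuxLemmas

open Finset

lemma tapp_nonneg {p n : ℕ} (B : Fin n → (Fin p → Fin n) → ℝ) (hB : ∀ i js, 0 ≤ B i js)
    {x : Fin n → ℝ} (hx : ∀ j, 0 ≤ x j) (i : Fin n) : 0 ≤ tapp p n B x i :=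
  Finset.sum_nonneg fun js _ => mul_nonneg (hB i js) (Finset.prod_nonneg fun j _ => hx _)

lemma tapp_mono {p n : ℕ} (B : Fin n → (Fin p → Fin n) → ℝ) (hB : ∀ i js, 0 ≤ B i js)
    {x y : Fin n → ℝ} (hx : ∀ j, 0 ≤ x j) (hxy : ∀ j, x j ≤ y j) (i : Fin n) :
    tapp p n B x i ≤ tapp p n B y i :=
  Finset.sum_le_sum fun js _ => mul_le_mul_of_nonneg_left
    (Finset.prod_le_prod (fun j _ => hx _) (fun j _ => hxy _)) (hB i js)

lemma tapp_sub {p n : ℕ} (C A : Fin n → (Fin p → Fin n) → ℝ) (x : Fin n → ℝ) (i : Fin n) :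
    tapp p n (fun i js => C i js - A i js) x i = tapp p n C x i - tapp p n A x i := by
  unfold tapp
  rw [← Finset.sum_sub_distrib]
  exact Finset.sum_congr rfl fun js _ => by ring

lemma tapp_diag {p n : ℕ} (A : Fin n → (Fin p → Fin n) → ℝ) (x : Fin n → ℝ) (i : Fin n) :
    tapp p n (diagT p n A) x i = A i (fun _ => i) * x i ^ p := by
  classical
  unfold tapp diagT
  rw [Finset.sum_eq_single (fun _ => i : Fin p → Fin n)]
  · rw [if_pos (fun j => rfl)]
    simp [Finset.prod_const]
  · intro js _ hne
    rw [if_neg, zero_mul]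
    intro h
    exact hne (funext h)
  · intro h
    exact absurd (Finset.mem_univ _) h

lemma sum_prod_eq {p n : ℕ} (x : Fin n → ℝ) :
    ∑ js : Fin p → Fin n, ∏ j : Fin p, x (js j) = (∑ k, x k) ^ p := by
  classical
  rw [show ((∑ k, x k) ^ p) = ∏ _j : Fin p, ∑ k, x k by
    simp [Finset.prod_const]]
  rw [Finset.prod_univ_sum]
  rw [Fintype.piFinset_univ]

lemma tapp_smul {p n : ℕ} (B : Fin n → (Fin p → Fin n) → ℝ) (c : ℝ) (x : Fin n → ℝ) (i : Fin n) :
    tapp p n B (fun j => c * x j) i = c ^ p * tapp p n B x i := by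
  unfold tapp
  rw [Finset.mul_sum]
  refine Finset.sum_congr rfl fun js _ => ?_
  rw [Finset.prod_mul_distrib, Finset.prod_const]
  simp
  ring

lemma tapp_continuous {p n : ℕ} (B : Fin n → (Fin p → Fin n) → ℝ) (i : Fin n) :
    Continuous fun x : Fin n → ℝ => tapp p n B x i := by
  unfold tapp
  exact continuous_finset_sum _ fun js _ =>
    continuous_const.mul (continuous_finset_prod _ fun j _ => continuous_apply _)

lemma eig_pos {p n : ℕ} (hp : 1 ≤ p) (hn : 0 < n) (B : Fin n → (Fin p → Fin n) → ℝ)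
    (α : ℝ) (hα : 0 < α) (hB : ∀ i js, α ≤ B i js) :
    ∃ lam : ℝ, ∃ x : Fin n → ℝ, x ∈ stdSimplex ℝ (Fin n) ∧ (∀ i, 0 < x i) ∧
      (∀ i, tapp p n B x i = lam * x i ^ p) := by
  classical
  haveI : Nonempty (Fin n) := Fin.pos_iff_nonempty.mp hn
  have hn' : ((n : ℝ)) ≠ 0 := Nat.cast_ne_zero.mpr hn.ne'
  have hBnn : ∀ i js, (0:ℝ) ≤ B i js := fun i js => le_trans hα.le (hB i js)
  have hpne : p ≠ 0 := by omega
  set S : Set ℝ :=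
    {lam | ∃ x, x ∈ stdSimplex ℝ (Fin n) ∧ ∀ i, tapp p n B x i ≤ lam * x i ^ p} with hSdef
  have hSne : S.Nonempty := by
    set xb : Fin n → ℝ := fun _ => (n:ℝ)⁻¹ with hxb
    set c0 : ℝ := Finset.univ.sup' Finset.univ_nonempty (fun i => tapp p n B xb i) with hc0
    refine ⟨(n:ℝ)^p * c0, xb, ⟨?_, ?_⟩, ?_⟩
    · intro j
      positivity
    · rw [Finset.sum_const, Finset.card_univ, Fintype.card_fin, nsmul_eq_mul,
        mul_inv_cancel₀ hn']
    · intro i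
      have h1 : tapp p n B xb i ≤ c0 := Finset.le_sup' _ (Finset.mem_univ i)
      have h2 : ((n:ℝ))^p * ((n:ℝ)⁻¹)^p = 1 := by
        rw [← mul_pow, mul_inv_cancel₀ hn', one_pow]
      calc tapp p n B xb i ≤ c0 := h1
        _ = ((n:ℝ)^p * c0) * ((n:ℝ)⁻¹)^p := by
            rw [show ((n:ℝ)^p * c0) * ((n:ℝ)⁻¹)^p = c0 * ((n:ℝ)^p * ((n:ℝ)⁻¹)^p) by ring,
              h2, mul_one]
        _ = ((n:ℝ)^p * c0) * xb i ^ p := rfl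
  have hSbdd : BddBelow S := by
    refine ⟨0, fun lam hlam => ?_⟩
    obtain ⟨xw, hxΔ, hineq⟩ := hlam
    obtain ⟨i, hxi⟩ : ∃ i, 0 < xw i := by
      by_contra h
      push_neg at h
      have hz : ∀ j, xw j = 0 := fun j => le_antisymm (h j) (hxΔ.1 j)
      have hsum := hxΔ.2
      rw [Finset.sum_eq_zero (fun j _ => hz j)] at hsum
      norm_num at hsum
    have h0 : 0 ≤ lam * xw i ^ p :=
      le_trans (tapp_nonneg B hBnn hxΔ.1 i) (hineq i)
    nlinarith [pow_pos hxi p]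
  set lam0 := sInf S with hlam0
  have hseq : ∀ k : ℕ, ∃ lam, lam ∈ S ∧ lam < lam0 + 1/((k:ℝ)+1) := by
    intro k
    have h1 : lam0 < lam0 + 1/((k:ℝ)+1) := lt_add_of_pos_right _ (by positivity)
    obtain ⟨a, haS, halt⟩ := exists_lt_of_csInf_lt hSne h1
    exact ⟨a, haS, halt⟩
  choose lamseq hlamS hlamlt using hseq
  choose xseq hxΔ hxineq using fun k => (hlamS k)
  obtain ⟨xstar, hxstarΔ, φ, hφmono, hφtend⟩ :=
    (isCompact_stdSimplex ℝ (Fin n)).tendsto_subseq hxΔ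
  have hlamtend : Filter.Tendsto lamseq Filter.atTop (nhds lam0) := by
    refine tendsto_of_tendsto_of_tendsto_of_le_of_le (g := fun _ => lam0)
      (h := fun k : ℕ => lam0 + 1/((k:ℝ)+1)) tendsto_const_nhds ?_
      (fun k => csInf_le hSbdd (hlamS k)) (fun k => (hlamlt k).le)
    have h0 : Filter.Tendsto (fun k : ℕ => lam0 + 1/((k:ℝ)+1)) Filter.atTop (nhds (lam0 + 0)) :=
      tendsto_const_nhds.add tendsto_one_div_add_atTop_nhds_zero_nat
    simpa using h0
  have hlamφ : Filter.Tendsto (fun k => lamseq (φ k)) Filter.atTop (nhds lam0) :=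
    hlamtend.comp hφmono.tendsto_atTop
  have hxcoord : ∀ i, Filter.Tendsto (fun k => xseq (φ k) i) Filter.atTop (nhds (xstar i)) :=
    fun i => tendsto_pi_nhds.mp hφtend i
  have hxstar_ineq : ∀ i, tapp p n B xstar i ≤ lam0 * xstar i ^ p := by
    intro i
    have hL : Filter.Tendsto (fun k => tapp p n B (xseq (φ k)) i) Filter.atTop
        (nhds (tapp p n B xstar i)) :=
      ((tapp_continuous B i).tendsto xstar).comp hφtend
    have hR : Filter.Tendsto (fun k => lamseq (φ k) * (xseq (φ k) i) ^ p) Filter.atTop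
        (nhds (lam0 * xstar i ^ p)) :=
      hlamφ.mul ((hxcoord i).pow p)
    exact le_of_tendsto_of_tendsto' hL hR (fun k => hxineq (φ k) i)
  have hlow : ∀ i, α ≤ tapp p n B xstar i := by
    intro i
    have h1 : α * (∑ k, xstar k) ^ p ≤ tapp p n B xstar i := by
      rw [← sum_prod_eq, Finset.mul_sum]
      exact Finset.sum_le_sum fun js _ => mul_le_mul_of_nonneg_right (hB i js)
        (Finset.prod_nonneg fun j _ => hxstarΔ.1 _)
    rw [hxstarΔ.2] at h1
    simpa using h1
  have hxstar_pos : ∀ i, 0 < xstar i := by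
    intro i
    rcases lt_or_ge 0 (xstar i) with h | h
    · exact h
    · exfalso
      have hxi0 : xstar i = 0 := le_antisymm h (hxstarΔ.1 i)
      have h2 := hxstar_ineq i
      rw [hxi0, zero_pow hpne, mul_zero] at h2
      linarith [hlow i]
  have hxstar_eq : ∀ i, tapp p n B xstar i = lam0 * xstar i ^ p := by
    by_contra hcon
    push_neg at hcon
    obtain ⟨i1, hi1⟩ := hcon
    have hstrict : tapp p n B xstar i1 < lam0 * xstar i1 ^ p :=
      lt_of_le_of_ne (hxstar_ineq i1) hi1
    set c := tapp p n B xstar i1 with hc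
    have hcpos : 0 < c := lt_of_lt_of_le hα (hlow i1)
    set Pd := lam0 * xstar i1 ^ p with hPd
    have hPdpos : 0 < Pd := lt_trans hcpos hstrict
    set r := c / Pd with hr
    have hr0 : 0 < r := div_pos hcpos hPdpos
    have hr1 : r < 1 := (div_lt_one hPdpos).mpr hstrict
    set t := (r+1)/2 with ht
    have ht0 : 0 < t := by rw [ht]; linarith
    have ht1 : t < 1 := by rw [ht]; linarith
    have hrt : r < t := by rw [ht]; linarith
    set δ := t ^ ((p:ℝ)⁻¹) with hδ
    have hδ0 : 0 < δ := Real.rpow_pos_of_pos ht0 _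
    have hδ1 : δ < 1 := Real.rpow_lt_one ht0.le ht1 (by positivity)
    have hδp : δ ^ p = t := by
      have hpR : ((p:ℝ)) ≠ 0 := Nat.cast_ne_zero.mpr hpne
      rw [← Real.rpow_natCast δ p, hδ, ← Real.rpow_mul ht0.le,
        inv_mul_cancel₀ hpR, Real.rpow_one]
    set y := Function.update xstar i1 (δ * xstar i1) with hy
    have hyi1 : y i1 = δ * xstar i1 := Function.update_self _ _ _
    have hyneq : ∀ j, j ≠ i1 → y j = xstar j := fun j hj => Function.update_of_ne hj _ _
    have hypos : ∀ j, 0 < y j := by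
      intro j
      by_cases hj : j = i1
      · subst hj; rw [hyi1]; exact mul_pos hδ0 (hxstar_pos _)
      · rw [hyneq j hj]; exact hxstar_pos j
    have hyle : ∀ j, y j ≤ xstar j := by
      intro j
      by_cases hj : j = i1
      · subst hj; rw [hyi1]; nlinarith [hxstar_pos j]
      · rw [hyneq j hj]
    have hylt : y i1 < xstar i1 := by rw [hyi1]; nlinarith [hxstar_pos i1]
    have hstrict_all : ∀ i, tapp p n B y i < lam0 * y i ^ p := by
      intro i
      by_cases hi : i = i1
      · rw [hi]
        have h1 : tapp p n B y i1 ≤ c :=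
          tapp_mono B hBnn (fun j => (hypos j).le) hyle i1
        have h2 : c < t * Pd := by
          have hc' : c = r * Pd := by rw [hr]; field_simp
          rw [hc']
          exact mul_lt_mul_of_pos_right hrt hPdpos
        have h3 : lam0 * y i1 ^ p = t * Pd := by
          rw [hyi1, mul_pow, hδp, hPd]; ring
        linarith
      · have hterm : B i (fun _ => i1) * ∏ j : Fin p, y ((fun _ : Fin p => i1) j)
            < B i (fun _ => i1) * ∏ j : Fin p, xstar ((fun _ : Fin p => i1) j) := by
          have hBpos : 0 < B i (fun _ => i1) := lt_of_lt_of_le hα (hB _ _)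
          refine mul_lt_mul_of_pos_left ?_ hBpos
          have e1 : ∏ _j : Fin p, y i1 = y i1 ^ p := by simp [Finset.prod_const]
          have e2 : ∏ _j : Fin p, xstar i1 = xstar i1 ^ p := by simp [Finset.prod_const]
          rw [e1, e2]
          exact pow_lt_pow_left₀ hylt (hypos i1).le hpne
        have hsum : tapp p n B y i < tapp p n B xstar i := by
          unfold tapp
          refine Finset.sum_lt_sum (fun js _ => mul_le_mul_of_nonneg_left
            (Finset.prod_le_prod (fun j _ => (hypos _).le) (fun j _ => hyle _)) (hBnn i js))
            ⟨(fun _ => i1), Finset.mem_univ _, hterm⟩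
        calc tapp p n B y i < tapp p n B xstar i := hsum
          _ ≤ lam0 * xstar i ^ p := hxstar_ineq i
          _ = lam0 * y i ^ p := by rw [hyneq i hi]
    set lam' := Finset.univ.sup' Finset.univ_nonempty (fun i => tapp p n B y i / y i ^ p)
      with hlam'
    have hlam'lt : lam' < lam0 := by
      rw [hlam', Finset.sup'_lt_iff]
      intro i _
      rw [div_lt_iff₀ (pow_pos (hypos i) p)]
      exact hstrict_all i
    have hlam'ge : ∀ i, tapp p n B y i ≤ lam' * y i ^ p := by
      intro i
      have h1 := Finset.le_sup' (fun i => tapp p n B y i / y i ^ p) (Finset.mem_univ i)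
      rw [← hlam', div_le_iff₀ (pow_pos (hypos i) p)] at h1
      linarith
    have hsy : 0 < ∑ j, y j := Finset.sum_pos (fun j _ => hypos j) Finset.univ_nonempty
    set w := fun j => (∑ j', y j')⁻¹ * y j with hw
    have hwΔ : w ∈ stdSimplex ℝ (Fin n) := by
      constructor
      · intro j
        exact mul_nonneg (inv_nonneg.mpr hsy.le) (hypos j).le
      · rw [hw]
        simp only []
        rw [← Finset.mul_sum, inv_mul_cancel₀ hsy.ne']
    have hwineq : ∀ i, tapp p n B w i ≤ lam' * w i ^ p := by
      intro i
      have h1 : tapp p n B w i = ((∑ j', y j')⁻¹)^p * tapp p n B y i := by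
        rw [hw]; exact tapp_smul B _ y i
      have h2 : w i ^ p = ((∑ j', y j')⁻¹)^p * y i ^ p := by rw [hw, mul_pow]
      rw [h1, h2]
      calc ((∑ j', y j')⁻¹)^p * tapp p n B y i
          ≤ ((∑ j', y j')⁻¹)^p * (lam' * y i ^ p) :=
            mul_le_mul_of_nonneg_left (hlam'ge i) (by positivity)
        _ = lam' * (((∑ j', y j')⁻¹)^p * y i ^ p) := by ring
    have hmem : lam' ∈ S := ⟨w, hwΔ, hwineq⟩
    have : lam0 ≤ lam' := csInf_le hSbdd hmem
    linarith
  exact ⟨lam0, xstar, hxstarΔ, hxstar_pos, hxstar_eq⟩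

end AuxLemmas


lemma eig_nonneg {p n : ℕ} (hp : 1 ≤ p) (hn : 0 < n) (B : Fin n → (Fin p → Fin n) → ℝ)
    (hB : ∀ i js, 0 ≤ B i js) :
    ∃ lam : ℝ, ∃ x : Fin n → ℝ, x ∈ stdSimplex ℝ (Fin n) ∧
      (∀ i, tapp p n B x i = lam * x i ^ p) ∧ ∀ i, B i (fun _ => i) ≤ lam := by
  classical
  haveI : Nonempty (Fin n) := Fin.pos_iff_nonempty.mp hn
  have hpne : p ≠ 0 := by omega
  have H : ∀ k : ℕ, ∃ lam : ℝ, ∃ x : Fin n → ℝ, x ∈ stdSimplex ℝ (Fin n) ∧ (∀ i, 0 < x i) ∧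
      (∀ i, tapp p n (fun i js => B i js + 1/((k:ℝ)+1)) x i = lam * x i ^ p) := by
    intro k
    exact eig_pos hp hn _ (1/((k:ℝ)+1)) (by positivity)
      (fun i js => le_add_of_nonneg_left (hB i js))
  choose lamseq xseq hxΔ hxpos heq using H
  have hdiag : ∀ (k : ℕ) (i : Fin n), B i (fun _ => i) + 1/((k:ℝ)+1) ≤ lamseq k := by
    intro k i
    have h1 : (B i (fun _ => i) + 1/((k:ℝ)+1)) * xseq k i ^ p
        ≤ tapp p n (fun i js => B i js + 1/((k:ℝ)+1)) (xseq k) i := by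
      have hs := Finset.single_le_sum
        (f := fun js : Fin p → Fin n => (B i js + 1/((k:ℝ)+1)) * ∏ j, xseq k (js j))
        (fun js _ => mul_nonneg (add_nonneg (hB i js) (by positivity))
          (Finset.prod_nonneg fun j _ => (hxpos k _).le))
        (Finset.mem_univ (fun _ => i))
      simpa [tapp, Finset.prod_const] using hs
    rw [heq k i] at h1
    exact le_of_mul_le_mul_right h1 (pow_pos (hxpos k i) p)
  have hdiag' : ∀ (k : ℕ) (i : Fin n), B i (fun _ => i) ≤ lamseq k := by
    intro k i
    have : (0:ℝ) < 1/((k:ℝ)+1) := by positivity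
    linarith [hdiag k i]
  have hlb : ∀ k, (0:ℝ) ≤ lamseq k :=
    fun k => le_trans (hB _ _) (hdiag' k (Classical.arbitrary _))
  set M := Finset.univ.sup' Finset.univ_nonempty
    (fun i => ∑ js : Fin p → Fin n, B i js) + (n:ℝ)^p with hM
  have hub : ∀ k, lamseq k ≤ M := by
    intro k
    obtain ⟨i, -, hmax⟩ := Finset.exists_max_image Finset.univ (fun i => xseq k i)
      ⟨Classical.arbitrary _, Finset.mem_univ _⟩
    have hxipos : 0 < xseq k i := hxpos k i
    have h2 : tapp p n (fun i js => B i js + 1/((k:ℝ)+1)) (xseq k) i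
        ≤ (∑ js : Fin p → Fin n, (B i js + 1/((k:ℝ)+1))) * xseq k i ^ p := by
      unfold tapp
      rw [Finset.sum_mul]
      refine Finset.sum_le_sum fun js _ => ?_
      refine mul_le_mul_of_nonneg_left ?_ (add_nonneg (hB i js) (by positivity))
      calc ∏ j, xseq k (js j) ≤ ∏ _j : Fin p, xseq k i :=
            Finset.prod_le_prod (fun j _ => (hxpos k _).le)
              (fun j _ => hmax _ (Finset.mem_univ _))
        _ = xseq k i ^ p := by simp [Finset.prod_const]
    have h3 : (∑ js : Fin p → Fin n, (B i js + 1/((k:ℝ)+1))) ≤ M := by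
      rw [Finset.sum_add_distrib, Finset.sum_const, Finset.card_univ, nsmul_eq_mul]
      have hc : (Fintype.card (Fin p → Fin n) : ℝ) = (n:ℝ)^p := by
        rw [Fintype.card_fun]
        push_cast [Fintype.card_fin]
        ring
      have hd1 : 1/((k:ℝ)+1) ≤ 1 := by
        rw [div_le_one (by positivity)]
        linarith [Nat.cast_nonneg (α := ℝ) k]
      have hd2 : (Fintype.card (Fin p → Fin n) : ℝ) * (1/((k:ℝ)+1)) ≤ (n:ℝ)^p := by
        rw [hc]
        calc (n:ℝ)^p * (1/((k:ℝ)+1)) ≤ (n:ℝ)^p * 1 :=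
              mul_le_mul_of_nonneg_left hd1 (by positivity)
          _ = (n:ℝ)^p := mul_one _
      have hd3 : ∑ js : Fin p → Fin n, B i js ≤ Finset.univ.sup' Finset.univ_nonempty
          (fun i => ∑ js : Fin p → Fin n, B i js) :=
        Finset.le_sup' (fun i => ∑ js : Fin p → Fin n, B i js) (Finset.mem_univ i)
      rw [hM]
      linarith
    have h4 : lamseq k * xseq k i ^ p ≤ M * xseq k i ^ p := by
      rw [← heq k i]
      exact le_trans h2 (mul_le_mul_of_nonneg_right h3 (pow_pos hxipos p).le)
    exact le_of_mul_le_mul_right h4 (pow_pos hxipos p)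
  obtain ⟨xstar, hxstarΔ, φ1, hφ1, hx1⟩ := (isCompact_stdSimplex ℝ (Fin n)).tendsto_subseq hxΔ
  obtain ⟨lam, -, φ2, hφ2, hlam2⟩ := (isCompact_Icc (a := (0:ℝ)) (b := M)).tendsto_subseq
    (x := fun k => lamseq (φ1 k)) (fun k => ⟨hlb _, hub _⟩)
  set ψ : ℕ → ℕ := φ1 ∘ φ2 with hψdef
  have hψ : StrictMono ψ := hφ1.comp hφ2
  have hxψ : Filter.Tendsto (fun k => xseq (ψ k)) Filter.atTop (nhds xstar) :=
    hx1.comp hφ2.tendsto_atTop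
  have hlamψ : Filter.Tendsto (fun k => lamseq (ψ k)) Filter.atTop (nhds lam) := hlam2
  have heqlim : ∀ i, tapp p n B xstar i = lam * xstar i ^ p := by
    intro i
    have hsplit : ∀ k : ℕ, tapp p n B (xseq (ψ k)) i + 1/((ψ k : ℝ)+1)
        = lamseq (ψ k) * xseq (ψ k) i ^ p := by
      intro k
      have h0 := heq (ψ k) i
      have h1 : tapp p n (fun i js => B i js + 1/((ψ k:ℝ)+1)) (xseq (ψ k)) i
          = tapp p n B (xseq (ψ k)) i + 1/((ψ k:ℝ)+1) := by
        unfold tapp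
        rw [Finset.sum_congr rfl (fun js _ => add_mul (B i js) (1/((ψ k:ℝ)+1)) _),
          Finset.sum_add_distrib, ← Finset.mul_sum, sum_prod_eq, (hxΔ (ψ k)).2,
          one_pow, mul_one]
      rw [← h1, h0]
    have hT1 : Filter.Tendsto (fun k => tapp p n B (xseq (ψ k)) i) Filter.atTop
        (nhds (tapp p n B xstar i)) :=
      ((tapp_continuous B i).tendsto xstar).comp hxψ
    have hT2 : Filter.Tendsto (fun k => 1/((ψ k:ℝ)+1)) Filter.atTop (nhds 0) :=
      tendsto_one_div_add_atTop_nhds_zero_nat.comp hψ.tendsto_atTop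
    have hT3 : Filter.Tendsto (fun k => lamseq (ψ k) * xseq (ψ k) i ^ p) Filter.atTop
        (nhds (lam * xstar i ^ p)) :=
      hlamψ.mul ((tendsto_pi_nhds.mp hxψ i).pow p)
    have hEq : (fun k => tapp p n B (xseq (ψ k)) i + 1/((ψ k:ℝ)+1))
        = fun k => lamseq (ψ k) * xseq (ψ k) i ^ p := funext hsplit
    have h5 : Filter.Tendsto (fun k => tapp p n B (xseq (ψ k)) i + 1/((ψ k:ℝ)+1))
        Filter.atTop (nhds (lam * xstar i ^ p)) := hEq ▸ hT3
    have h6 := tendsto_nhds_unique (hT1.add hT2) h5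
    simpa using h6
  have hdlim : ∀ i, B i (fun _ => i) ≤ lam := fun i =>
    ge_of_tendsto' hlamψ (fun k => hdiag' (ψ k) i)
  exact ⟨lam, xstar, hxstarΔ, heqlim, hdlim⟩

lemma diag_pos {p n : ℕ} (hp : 1 ≤ p) (A : Fin n → (Fin p → Fin n) → ℝ)
    (hA : IsMTensor p n A) (i0 : Fin n) : 0 < A i0 (fun _ => i0) := by
  classical
  obtain ⟨s, B, hB, hρ, hAeq⟩ := hA
  have hn : 0 < n := i0.pos
  haveI : Nonempty (Fin n) := ⟨i0⟩
  have hpne : p ≠ 0 := by omega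
  obtain ⟨lam, xx, hxΔ, heq, hd⟩ := eig_nonneg hp hn B hB
  have hbdd : BddAbove {r : ℝ | ∃ lam : ℝ, ∃ x : Fin n → ℝ, x ≠ 0 ∧
      (∀ i, tapp p n B x i = lam * x i ^ p) ∧ r = |lam|} := by
    refine ⟨Finset.univ.sup' Finset.univ_nonempty
      (fun i => ∑ js : Fin p → Fin n, B i js), fun r hr => ?_⟩
    obtain ⟨lam, xv, hx0, heqx, hrr⟩ := hr
    obtain ⟨i, -, hmax⟩ := Finset.exists_max_image Finset.univ (fun i => |xv i|)
      ⟨i0, Finset.mem_univ _⟩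
    have hxipos : 0 < |xv i| := by
      obtain ⟨j, hj⟩ := Function.ne_iff.mp hx0
      have hj' : xv j ≠ 0 := hj
      exact lt_of_lt_of_le (abs_pos.mpr hj') (hmax j (Finset.mem_univ _))
    have h1 : |lam| * |xv i| ^ p ≤ (∑ js : Fin p → Fin n, B i js) * |xv i| ^ p := by
      have h2 : |lam * xv i ^ p| = |lam| * |xv i| ^ p := by rw [abs_mul, abs_pow]
      rw [← h2, ← heqx i]
      calc |tapp p n B xv i| ≤ ∑ js : Fin p → Fin n, |B i js * ∏ j, xv (js j)| :=
            Finset.abs_sum_le_sum_abs _ _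
        _ ≤ ∑ js : Fin p → Fin n, B i js * |xv i| ^ p := by
            refine Finset.sum_le_sum fun js _ => ?_
            rw [abs_mul, abs_of_nonneg (hB i js), Finset.abs_prod]
            refine mul_le_mul_of_nonneg_left ?_ (hB i js)
            calc ∏ j, |xv (js j)| ≤ ∏ _j : Fin p, |xv i| :=
                  Finset.prod_le_prod (fun _ _ => abs_nonneg _)
                    (fun j _ => hmax _ (Finset.mem_univ _))
              _ = |xv i| ^ p := by simp [Finset.prod_const]
        _ = (∑ js : Fin p → Fin n, B i js) * |xv i| ^ p := by rw [Finset.sum_mul]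
    have h3 : |lam| ≤ ∑ js : Fin p → Fin n, B i js :=
      le_of_mul_le_mul_right h1 (pow_pos hxipos p)
    exact hrr ▸ le_trans h3
      (Finset.le_sup' (fun i => ∑ js : Fin p → Fin n, B i js) (Finset.mem_univ i))
  have hxx0 : xx ≠ 0 := by
    intro h
    have hs := hxΔ.2
    rw [h] at hs
    simp at hs
  have hmem : |lam| ∈ {r : ℝ | ∃ lam : ℝ, ∃ x : Fin n → ℝ, x ≠ 0 ∧
      (∀ i, tapp p n B x i = lam * x i ^ p) ∧ r = |lam|} := ⟨lam, xx, hxx0, heq, rfl⟩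
  have h4 : B i0 (fun _ => i0) ≤ tensorSpecRad p n B :=
    calc B i0 (fun _ => i0) ≤ lam := hd i0
      _ ≤ |lam| := le_abs_self lam
      _ ≤ tensorSpecRad p n B := le_csSup hbdd hmem
  have h5 : B i0 (fun _ => i0) < s := lt_of_le_of_lt h4 hρ
  have h6 := hAeq i0 (fun _ => i0)
  have hident : identT p n i0 (fun _ => i0) = 1 := by simp [identT]
  rw [hident, mul_one] at h6
  linarith

/-- the Jacobi iteration started at `x₀` with `A x₀^{m-1} ≥ b` is
squeezed between any `z ∈ S_l` with `z ≤ x₀` and the previous iterate, decreases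
monotonically, and converges to a solution `x* ≥ z`. -/
theorem stmt6 (m n : ℕ) (hm : 2 ≤ m) (A : Fin n → (Fin (m-1) → Fin n) → ℝ)
    (hA : IsMTensor (m-1) n A) (b : Fin n → ℝ)
    (x0 z : Fin n → ℝ) (hx0 : 0 ≤ x0) (hAx0 : b ≤ tapp (m-1) n A x0)
    (hz : 0 ≤ z) (hzb : tapp (m-1) n A z ≤ b) (hzx0 : z ≤ x0)
    (x : ℕ → Fin n → ℝ) (hinit : x 0 = x0) (hxpos : ∀ k, 0 ≤ x (k+1))
    (hiter : ∀ k i, A i (fun _ => i) * (x (k+1) i) ^ (m-1) =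
      tapp (m-1) n (fun i js => diagT (m-1) n A i js - A i js) (x k) i + b i) :
    (∀ k, z ≤ x k ∧ x (k+1) ≤ x k) ∧
    ∃ xs : Fin n → ℝ, Filter.Tendsto x Filter.atTop (nhds xs) ∧
      tapp (m-1) n A xs = b ∧ z ≤ xs := by
  classical
  have hp : 1 ≤ m - 1 := by omega
  have hpne : m - 1 ≠ 0 := by omega
  have hD : ∀ i, 0 < A i (fun _ => i) := fun i => diag_pos hp A hA i
  obtain ⟨s, BB, hBB, hρ, hAeq⟩ := hA
  set N : Fin n → (Fin (m-1) → Fin n) → ℝ :=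
    fun i js => diagT (m-1) n A i js - A i js with hN
  have hNnn : ∀ i js, 0 ≤ N i js := by
    intro i js
    by_cases h : ∀ j, js j = i
    · have hjs : js = fun _ => i := funext h
      have h1 : diagT (m-1) n A i js = A i (fun _ => i) := by
        simp only [diagT]
        rw [if_pos h]
      have h2 : A i js = A i (fun _ => i) := by rw [hjs]
      rw [hN]
      simp only []
      rw [h1, h2, sub_self]
    · have h1 : identT (m-1) n i js = 0 := by
        simp only [identT]
        rw [if_neg h]
      have h2 : A i js = - BB i js := by rw [hAeq i js, h1]; ring
      have h3 : diagT (m-1) n A i js = 0 := by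
        simp only [diagT]
        rw [if_neg h]
      rw [hN]
      simp only []
      rw [h2, h3]
      simpa using hBB i js
  have hdecomp : ∀ (v : Fin n → ℝ) (i : Fin n), tapp (m-1) n A v i
      = A i (fun _ => i) * v i ^ (m-1) - tapp (m-1) n N v i := by
    intro v i
    have h1 : tapp (m-1) n N v i
        = tapp (m-1) n (diagT (m-1) n A) v i - tapp (m-1) n A v i := by
      rw [hN]
      exact tapp_sub _ _ v i
    rw [tapp_diag] at h1
    linarith
  have hxnn : ∀ k, 0 ≤ x k := by
    intro k
    cases k with
    | zero => rw [hinit]; exact hx0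
    | succ k => exact hxpos k
  have hstep : ∀ k, b ≤ tapp (m-1) n A (x k) → x (k+1) ≤ x k := by
    intro k hk i
    have h1 : A i (fun _ => i) * (x (k+1) i) ^ (m-1)
        ≤ A i (fun _ => i) * (x k i) ^ (m-1) := by
      rw [hiter k i]
      have h2 := hdecomp (x k) i
      have h3 := hk i
      linarith
    have h4 : (x (k+1) i) ^ (m-1) ≤ (x k i) ^ (m-1) := le_of_mul_le_mul_left h1 (hD i)
    exact (pow_le_pow_iff_left₀ (hxpos k i) (hxnn k i) hpne).mp h4
  have hzstep : ∀ k, z ≤ x k → z ≤ x (k+1) := by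
    intro k hk i
    have h1 : A i (fun _ => i) * z i ^ (m-1)
        ≤ A i (fun _ => i) * (x (k+1) i) ^ (m-1) := by
      rw [hiter k i]
      have h2 := hdecomp z i
      have h3 := hzb i
      have h4 : tapp (m-1) n N z i ≤ tapp (m-1) n N (x k) i :=
        tapp_mono N hNnn (fun j => hz j) (fun j => hk j) i
      linarith
    have h4 := le_of_mul_le_mul_left h1 (hD i)
    exact (pow_le_pow_iff_left₀ (hz i) (hxpos k i) hpne).mp h4
  have hbstep : ∀ k, z ≤ x k → b ≤ tapp (m-1) n A (x k) →
      b ≤ tapp (m-1) n A (x (k+1)) := by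
    intro k hk hbk i
    have hle : x (k+1) ≤ x k := hstep k hbk
    have h4 : tapp (m-1) n N (x (k+1)) i ≤ tapp (m-1) n N (x k) i :=
      tapp_mono N hNnn (fun j => hxpos k j) (fun j => hle j) i
    have h2 := hdecomp (x (k+1)) i
    have h5 := hiter k i
    linarith
  have main : ∀ k, z ≤ x k ∧ b ≤ tapp (m-1) n A (x k) := by
    intro k
    induction k with
    | zero => rw [hinit]; exact ⟨hzx0, hAx0⟩
    | succ k ih => exact ⟨hzstep k ih.1, hbstep k ih.1 ih.2⟩
  have hanti : ∀ i, Antitone fun k => x k i :=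
    fun i => antitone_nat_of_succ_le (fun k => hstep k (main k).2 i)
  have hbdd : ∀ i, BddBelow (Set.range fun k => x k i) := by
    intro i
    refine ⟨z i, ?_⟩
    rintro r ⟨k, rfl⟩
    exact (main k).1 i
  set xs : Fin n → ℝ := fun i => ⨅ k, x k i with hxs
  have hti : ∀ i, Filter.Tendsto (fun k => x k i) Filter.atTop (nhds (xs i)) := by
    intro i
    simp only [hxs]
    exact tendsto_atTop_ciInf (hanti i) (hbdd i)
  have htend : Filter.Tendsto x Filter.atTop (nhds xs) := tendsto_pi_nhds.mpr hti
  have hzxs : z ≤ xs := by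
    intro i
    simp only [hxs]
    exact le_ciInf fun k => (main k).1 i
  have heqn : ∀ i, A i (fun _ => i) * xs i ^ (m-1) = tapp (m-1) n N xs i + b i := by
    intro i
    have hsh : Filter.Tendsto (fun k => x (k+1) i) Filter.atTop (nhds (xs i)) :=
      (hti i).comp (tendsto_add_atTop_nat 1)
    have hL : Filter.Tendsto (fun k => A i (fun _ => i) * (x (k+1) i) ^ (m-1))
        Filter.atTop (nhds (A i (fun _ => i) * xs i ^ (m-1))) :=
      tendsto_const_nhds.mul (hsh.pow (m-1))
    have hR : Filter.Tendsto (fun k => tapp (m-1) n N (x k) i + b i) Filter.atTop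
        (nhds (tapp (m-1) n N xs i + b i)) :=
      (((tapp_continuous N i).tendsto xs).comp htend).add tendsto_const_nhds
    have hEq : (fun k => A i (fun _ => i) * (x (k+1) i) ^ (m-1))
        = fun k => tapp (m-1) n N (x k) i + b i := funext fun k => hiter k i
    exact tendsto_nhds_unique (hEq ▸ hL) hR
  have hsol : tapp (m-1) n A xs = b := by
    funext i
    have h1 := hdecomp xs i
    have h2 := heqn i
    linarith
  exact ⟨fun k => ⟨(main k).1, hstep k (main k).2⟩, xs, htend, hsol, hzxs⟩


end
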